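/- Let i ≥ 1 and n ≥ 2i. If f is an eigenfunction of J(n,i) with eigenvalue -i whose support has size exactly 2^i, then there exist disjoint i-subsets M = {m_1,...,m_i}, M' = {m_1',...,m_i'} of {1,...,n} and a nonzero scalar c such that f(x) = c·(-1)^{|x ∩ M|} when for each k exactly one of m_k, m_k' belongs to x, and f(x) = 0 otherwise. -/

import Mathlib

set_option linter.unusedSectionVars false
set_option linter.unusedVariables false

open Finset

variable {α : Type*} [Fintype α] [DecidableEq α]

/-- support of f at level i -/
noncomputable def jsupp (i : ℕ) (f : Finset α → ℝ) : Finset (Finset α) :=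
  univ.filter (fun x => x.card = i ∧ f x ≠ 0)

lemma mem_jsupp {i : ℕ} {f : Finset α → ℝ} {x : Finset α} :
    x ∈ jsupp i f ↔ x.card = i ∧ f x ≠ 0 := by
  simp [jsupp]

/-- harmonicity: shadow sums vanish -/
def Harm (i : ℕ) (f : Finset α → ℝ) : Prop :=
  ∀ S : Finset α, S.card = i - 1 → ∑ a ∈ Sᶜ, f (insert a S) = 0

/-- derivative -/
def der (a : α) (f : Finset α → ℝ) : Finset α → ℝ :=
  fun y => if a ∈ y then 0 else f (insert a y)

noncomputable def jvars (i : ℕ) (f : Finset α → ℝ) : Finset α := (jsupp i f).biUnion id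

lemma mem_jvars {i : ℕ} {f : Finset α → ℝ} {a : α} :
    a ∈ jvars i f ↔ ∃ x ∈ jsupp i f, a ∈ x := by
  simp [jvars]

lemma subset_jvars {i : ℕ} {f : Finset α → ℝ} {x : Finset α} (hx : x ∈ jsupp i f) :
    x ⊆ jvars i f := fun a ha => mem_jvars.2 ⟨x, hx, ha⟩

/-- generic double counting -/
lemma double_count {β : Type*} (F : Finset β) (G : Finset (Finset α))
    (R : β → Finset α → Prop) [∀ Z x, Decidable (R Z x)] (f : Finset α → ℝ) :
    ∑ Z ∈ F, (∑ x ∈ G.filter (R Z), f x) ^ 2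
      = ∑ x ∈ G, ∑ y ∈ G, f x * f y *
          ((F.filter (fun Z => R Z x ∧ R Z y)).card : ℝ) := by
  have h1 : ∀ Z, (∑ x ∈ G.filter (R Z), f x) ^ 2
      = ∑ x ∈ G, ∑ y ∈ G, (if R Z x ∧ R Z y then f x * f y else 0) := by
    intro Z
    rw [sq, sum_filter, sum_mul_sum]
    refine Finset.sum_congr rfl fun x _ => Finset.sum_congr rfl fun y _ => ?_
    by_cases hx : R Z x <;> by_cases hy : R Z y <;> simp [hx, hy]
  simp_rw [h1]
  rw [sum_comm]
  congr 1; ext x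
  rw [sum_comm]
  congr 1; ext y
  rw [card_filter]
  push_cast
  rw [mul_sum]
  congr 1; ext Z
  by_cases h : R Z x ∧ R Z y <;> simp [h]

lemma cD_eq (k : ℕ) (V x y : Finset α) (hx : x ⊆ V) :
    ((powersetCard k V).filter (fun S => S ⊆ x ∧ S ⊆ y)).card
      = ((x ∩ y).card).choose k := by
  rw [← card_powersetCard k (x ∩ y)]
  congr 1
  ext S
  simp only [mem_filter, mem_powersetCard, subset_inter_iff]
  constructor
  · tauto
  · rintro ⟨⟨h1, h2⟩, h3⟩
    exact ⟨⟨h1.trans hx, h3⟩, h1, h2⟩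

lemma filter_supersets_empty (k : ℕ) (V z : Finset α) (hk : k < z.card) :
    (powersetCard k V).filter (fun T => z ⊆ T) = ∅ := by
  rw [filter_eq_empty_iff]
  rintro T hT hzT
  rw [mem_powersetCard] at hT
  have h1 := card_le_card hzT
  have h2 := hT.2
  omega

lemma card_supersets (k : ℕ) (V z : Finset α) (hz : z ⊆ V) (hk : z.card ≤ k) :
    ((powersetCard k V).filter (fun T => z ⊆ T)).card
      = (V.card - z.card).choose (k - z.card) := by
  have hc : V.card - z.card = (V \ z).card := (card_sdiff_of_subset hz).symm
  rw [hc, ← card_powersetCard (k - z.card) (V \ z)]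
  apply card_nbij' (fun T => T \ z) (fun U => U ∪ z)
  · intro T hT
    simp only [mem_coe, mem_filter, mem_powersetCard] at hT ⊢
    refine ⟨fun a ha => ?_, ?_⟩
    · simp only [mem_sdiff] at ha ⊢
      exact ⟨hT.1.1 ha.1, ha.2⟩
    · rw [card_sdiff_of_subset hT.2, hT.1.2]
  · intro U hU
    simp only [mem_coe, mem_filter, mem_powersetCard] at hU ⊢
    have hdisj : Disjoint U z := disjoint_of_subset_left hU.1 sdiff_disjoint
    refine ⟨⟨union_subset (hU.1.trans (sdiff_subset)) hz, ?_⟩, subset_union_right⟩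
    rw [card_union_of_disjoint hdisj, hU.2]
    omega
  · intro T hT
    simp only [mem_coe, mem_filter] at hT
    exact sdiff_union_of_subset hT.2
  · intro U hU
    simp only [mem_coe, mem_filter, mem_powersetCard] at hU
    exact union_sdiff_cancel_right (disjoint_of_subset_left hU.1 sdiff_disjoint)

lemma sum_insert_eq (i : ℕ) (hi : 1 ≤ i) (V S : Finset α) (hS : S.card = i - 1)
    (hSV : S ⊆ V) (f : Finset α → ℝ) :
    ∑ x ∈ (powersetCard i V).filter (fun x => S ⊆ x), f x
      = ∑ a ∈ V \ S, f (insert a S) := by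
  have hinj : ∀ a ∈ V \ S, ∀ b ∈ V \ S, insert a S = insert b S → a = b := by
    intro a ha b hb hab
    simp only [mem_sdiff] at ha hb
    by_contra hne
    have : a ∈ insert b S := hab ▸ mem_insert_self a S
    rcases mem_insert.1 this with h | h
    · exact hne h
    · exact ha.2 h
  have himg : (powersetCard i V).filter (fun x => S ⊆ x)
      = (V \ S).image (fun a => insert a S) := by
    ext x
    simp only [mem_filter, mem_powersetCard, mem_image, mem_sdiff]
    constructor
    · rintro ⟨⟨hxV, hxc⟩, hSx⟩
      have hcard : (x \ S).card = 1 := by rw [card_sdiff_of_subset hSx]; omega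
      obtain ⟨a, ha⟩ := card_eq_one.1 hcard
      have haS : a ∈ x \ S := ha ▸ mem_singleton_self a
      rw [mem_sdiff] at haS
      refine ⟨a, ⟨hxV haS.1, haS.2⟩, ?_⟩
      apply Subset.antisymm
      · exact insert_subset haS.1 hSx
      · intro b hb
        by_cases hbS : b ∈ S
        · exact mem_insert_of_mem (hbS)
        · have : b ∈ x \ S := mem_sdiff.2 ⟨hb, hbS⟩
          rw [ha, mem_singleton] at this
          exact this ▸ mem_insert_self b S
    · rintro ⟨a, ⟨haV, haS⟩, rfl⟩
      refine ⟨⟨insert_subset haV hSV, ?_⟩, subset_insert a S⟩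
      rw [card_insert_of_notMem haS]; omega
  rw [himg, Finset.sum_image hinj]

lemma choose_inter_card {i : ℕ} (hi : 1 ≤ i) {x y : Finset α}
    (hx : x.card = i) (hy : y.card = i) :
    (((x ∩ y).card).choose (i-1) : ℝ)
      = (if y = x then (i:ℝ) else 0) + (if (x ∩ y).card + 1 = i then 1 else 0) := by
  by_cases hxy : y = x
  · subst hxy
    rw [inter_self, hy, if_pos rfl, if_neg (by omega)]
    rw [Nat.choose_symm (by omega : 1 ≤ i), Nat.choose_one_right]
    norm_num
  · rw [if_neg hxy]
    have hle : (x ∩ y).card ≤ i := hx ▸ card_le_card inter_subset_left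
    have hlt : (x ∩ y).card < i := by
      rcases Nat.lt_or_ge (x ∩ y).card i with h | h
      · exact h
      · exfalso
        have hxe : x ∩ y = x := eq_of_subset_of_card_le inter_subset_left (by omega)
        have hsub : x ⊆ y := by rw [← hxe]; exact inter_subset_right
        exact hxy (eq_of_subset_of_card_le hsub (by omega)).symm
    by_cases h2 : (x ∩ y).card + 1 = i
    · rw [if_pos h2]
      have : (x ∩ y).card = i - 1 := by omega
      rw [this, Nat.choose_self]
      norm_num
    · rw [if_neg h2, Nat.choose_eq_zero_of_lt (by omega)]
      norm_num

lemma eigen_harm (i : ℕ) (hi : 1 ≤ i) (f : Finset α → ℝ)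
    (hf : ∀ x : Finset α, x.card = i →
      ∑ y ∈ univ.filter (fun y : Finset α => y.card = i ∧ (x ∩ y).card + 1 = i), f y
        = -(i : ℝ) * f x) : Harm i f := by
  set G := powersetCard i (univ : Finset α) with hGdef
  have hGmem : ∀ y : Finset α, y ∈ G ↔ y.card = i := by
    intro y; simp [hGdef, mem_powersetCard]
  have h0 : ∑ S ∈ powersetCard (i-1) (univ : Finset α),
      (∑ x ∈ G.filter (fun x => S ⊆ x), f x) ^ 2 = 0 := by
    rw [double_count]
    apply sum_eq_zero
    intro x hx
    have hxc : x.card = i := (hGmem x).1 hx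
    calc ∑ y ∈ G, f x * f y *
            (((powersetCard (i-1) (univ : Finset α)).filter
              (fun S => S ⊆ x ∧ S ⊆ y)).card : ℝ)
        = ∑ y ∈ G, (f x * f y * (if y = x then (i:ℝ) else 0)
            + f x * f y * (if (x ∩ y).card + 1 = i then (1:ℝ) else 0)) := by
          apply sum_congr rfl
          intro y hy
          rw [cD_eq (i-1) univ x y (subset_univ x),
            choose_inter_card hi hxc ((hGmem y).1 hy)]
          ring
      _ = (∑ y ∈ G, f x * f y * (if y = x then (i:ℝ) else 0))
            + ∑ y ∈ G, f x * f y * (if (x ∩ y).card + 1 = i then (1:ℝ) else 0) :=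
          sum_add_distrib
      _ = 0 := by
          have e1 : (∑ y ∈ G, f x * f y * (if y = x then (i:ℝ) else 0))
              = f x * f x * i := by
            rw [Finset.sum_eq_single_of_mem x hx]
            · simp
            · intro y _ hyx
              simp [hyx]
          have e2 : (∑ y ∈ G, f x * f y * (if (x ∩ y).card + 1 = i then (1:ℝ) else 0))
              = f x * (-(i:ℝ) * f x) := by
            have hset : G.filter (fun y => (x ∩ y).card + 1 = i)
                = univ.filter (fun y : Finset α => y.card = i ∧ (x ∩ y).card + 1 = i) := by
              ext y
              simp only [mem_filter, mem_univ, true_and, hGdef, mem_powersetCard,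
                subset_univ]
            calc (∑ y ∈ G, f x * f y * (if (x ∩ y).card + 1 = i then (1:ℝ) else 0))
                = ∑ y ∈ G.filter (fun y => (x ∩ y).card + 1 = i), f x * f y := by
                  rw [sum_filter]
                  apply sum_congr rfl
                  intro y hy
                  by_cases h : (x ∩ y).card + 1 = i <;> simp [h]
              _ = f x * ∑ y ∈ univ.filter
                    (fun y : Finset α => y.card = i ∧ (x ∩ y).card + 1 = i), f y := by
                  rw [hset, mul_sum]
              _ = f x * (-(i:ℝ) * f x) := by rw [hf x hxc]
          rw [e1, e2]; ring
  intro S hS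
  have hSmem : S ∈ powersetCard (i-1) (univ : Finset α) :=
    (mem_powersetCard).2 ⟨subset_univ S, hS⟩
  have hz := (sum_eq_zero_iff_of_nonneg (fun S _ => sq_nonneg _)).1 h0 S hSmem
  have hz2 : ∑ x ∈ G.filter (fun x => S ⊆ x), f x = 0 := by
    exact pow_eq_zero_iff (by norm_num) |>.1 hz
  rw [sum_insert_eq i hi univ S hS (subset_univ S) f] at hz2
  rw [← hz2]
  apply sum_congr _ (fun _ _ => rfl)
  rw [compl_eq_univ_sdiff]

lemma vars_ge (i : ℕ) (hi : 1 ≤ i) (f : Finset α → ℝ) (hh : Harm i f)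
    (hne : (jsupp i f).Nonempty) : 2 * i ≤ (jvars i f).card := by
  set V := jvars i f with hVdef
  set G := powersetCard i V with hGdef
  -- shadow sums over V vanish
  have hDS : ∀ S ∈ powersetCard (i-1) V, ∑ x ∈ G.filter (fun x => S ⊆ x), f x = 0 := by
    intro S hS
    rw [mem_powersetCard] at hS
    rw [sum_insert_eq i hi V S hS.2 hS.1 f]
    rw [← hh S hS.2]
    apply sum_subset
    · intro a ha
      rw [mem_sdiff] at ha
      simpa using ha.2
    · intro a ha hna
      by_contra hfa
      have hanS : a ∉ S := by simpa using ha
      have hmem : insert a S ∈ jsupp i f := mem_jsupp.2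
        ⟨by rw [card_insert_of_notMem hanS]; omega, hfa⟩
      have haV : a ∈ V := subset_jvars hmem (mem_insert_self a S)
      exact hna (mem_sdiff.2 ⟨haV, hanS⟩)
  -- pointwise difference of the two counts
  have hcnt : ∀ x ∈ G, ∀ y ∈ G,
      (((powersetCard (i+1) V).filter (fun T => x ⊆ T ∧ y ⊆ T)).card : ℝ)
        - (((powersetCard (i-1) V).filter (fun S => S ⊆ x ∧ S ⊆ y)).card : ℝ)
        = if x = y then (V.card : ℝ) - 2*i else 0 := by
    intro x hx y hy
    rw [mem_powersetCard] at hx hy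
    rw [cD_eq (i-1) V x y hx.1]
    have hfil : (powersetCard (i+1) V).filter (fun T => x ⊆ T ∧ y ⊆ T)
        = (powersetCard (i+1) V).filter (fun T => x ∪ y ⊆ T) := by
      ext T
      simp only [mem_filter, union_subset_iff]
    rw [hfil]
    by_cases hxy : x = y
    · subst hxy
      rw [if_pos rfl, union_self,
        card_supersets (i+1) V x hx.1 (by omega), inter_self, hx.2]
      have h1 : i + 1 - i = 1 := by omega
      rw [h1, Nat.choose_one_right,
        Nat.choose_symm (by omega : 1 ≤ i), Nat.choose_one_right]
      have hiV : i ≤ V.card := hx.2 ▸ card_le_card hx.1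
      push_cast [Nat.cast_sub hiV]
      ring
    · rw [if_neg hxy]
      have hle : (x ∩ y).card ≤ i := hx.2 ▸ card_le_card inter_subset_left
      have hlt : (x ∩ y).card < i := by
        rcases Nat.lt_or_ge (x ∩ y).card i with h | h
        · exact h
        · exfalso
          have hxe : x ∩ y = x := eq_of_subset_of_card_le inter_subset_left (by omega)
          have hsub : x ⊆ y := by rw [← hxe]; exact inter_subset_right
          exact hxy (eq_of_subset_of_card_le hsub (by omega))
      have hunion : (x ∪ y).card + (x ∩ y).card = 2*i := by
        rw [card_union_add_card_inter, hx.2, hy.2]; omega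
      by_cases h2 : (x ∩ y).card + 1 = i
      · have hu : (x ∪ y).card = i + 1 := by omega
        rw [card_supersets (i+1) V (x ∪ y) (union_subset hx.1 hy.1) (by omega), hu]
        have : (x ∩ y).card = i - 1 := by omega
        rw [this, Nat.choose_self, Nat.sub_self, Nat.choose_zero_right]
        norm_num
      · have hlt2 : (x ∩ y).card < i - 1 := by omega
        rw [filter_supersets_empty (i+1) V (x ∪ y) (by omega),
          Nat.choose_eq_zero_of_lt hlt2]
        simp
  -- the main inequality
  have hU := double_count (powersetCard (i+1) V) G (fun T x => x ⊆ T) f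
  have hD := double_count (powersetCard (i-1) V) G (fun S x => S ⊆ x) f
  have hDzero : ∑ x ∈ G, ∑ y ∈ G, f x * f y *
      (((powersetCard (i-1) V).filter (fun S => S ⊆ x ∧ S ⊆ y)).card : ℝ) = 0 := by
    rw [← hD]
    apply sum_eq_zero
    intro S hS
    rw [hDS S hS]
    ring
  have hkey : ∑ T ∈ powersetCard (i+1) V, (∑ x ∈ G.filter (fun x => x ⊆ T), f x) ^ 2
      = ((V.card : ℝ) - 2*i) * ∑ x ∈ G, (f x)^2 := by
    rw [hU, ← sub_zero (∑ x ∈ G, ∑ y ∈ G, _), ← hDzero, ← sum_sub_distrib]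
    rw [mul_sum]
    apply sum_congr rfl
    intro x hx
    rw [← sum_sub_distrib]
    calc ∑ y ∈ G, (f x * f y *
            (((powersetCard (i+1) V).filter (fun T => x ⊆ T ∧ y ⊆ T)).card : ℝ)
          - f x * f y *
            (((powersetCard (i-1) V).filter (fun S => S ⊆ x ∧ S ⊆ y)).card : ℝ))
        = ∑ y ∈ G, f x * f y * (if x = y then (V.card : ℝ) - 2*i else 0) := by
          apply sum_congr rfl
          intro y hy
          rw [← mul_sub, hcnt x hx y hy]
      _ = ((V.card : ℝ) - 2*i) * (f x)^2 := by
          rw [Finset.sum_eq_single_of_mem x hx]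
          · rw [if_pos rfl]; ring
          · intro y _ hyx
            rw [if_neg (Ne.symm hyx)]
            ring
  have hpos : 0 < ∑ x ∈ G, (f x)^2 := by
    obtain ⟨x0, hx0⟩ := hne
    have hx0' := mem_jsupp.1 hx0
    have hx0G : x0 ∈ G := (mem_powersetCard).2 ⟨subset_jvars hx0, hx0'.1⟩
    apply sum_pos' (fun x _ => sq_nonneg _)
    exact ⟨x0, hx0G, lt_of_le_of_ne (sq_nonneg _) (Ne.symm (pow_ne_zero 2 hx0'.2))⟩
  have hnn : (0:ℝ) ≤ ((V.card : ℝ) - 2*i) * ∑ x ∈ G, (f x)^2 := by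
    rw [← hkey]
    exact sum_nonneg (fun T _ => sq_nonneg _)
  have : (0:ℝ) ≤ (V.card : ℝ) - 2*i := nonneg_of_mul_nonneg_right (by linarith [hnn] : (0:ℝ) ≤ (∑ x ∈ G, (f x)^2) * ((V.card : ℝ) - 2*i)) hpos
  have : (2*i : ℝ) ≤ (V.card : ℝ) := by linarith
  exact_mod_cast this

lemma mem_jsupp_der {i : ℕ} {a : α} {f : Finset α → ℝ} {y : Finset α} :
    y ∈ jsupp i (der a f) ↔ y.card = i ∧ a ∉ y ∧ f (insert a y) ≠ 0 := by
  rw [mem_jsupp]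
  unfold der
  by_cases h : a ∈ y <;> simp [h]

lemma harm_der (i : ℕ) (hi : 1 ≤ i) (a : α) (f : Finset α → ℝ)
    (hh : Harm (i+1) f) : Harm i (der a f) := by
  intro S hS
  by_cases haS : a ∈ S
  · apply sum_eq_zero
    intro b hb
    simp [der, mem_insert, haS]
  · have hs' : (insert a S).card = (i+1) - 1 := by
      rw [card_insert_of_notMem haS]; omega
    have h1 := hh (insert a S) hs'
    rw [← h1, compl_insert]
    rw [← Finset.add_sum_erase _ _ (mem_compl.2 haS)]
    have : der a f (insert a S) = 0 := by simp [der]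
    rw [this, zero_add]
    apply sum_congr rfl
    intro b hb
    rw [mem_erase, mem_compl] at hb
    rw [der, if_neg (by
      rw [mem_insert]
      push_neg
      exact ⟨fun h => hb.1 h.symm, haS⟩), Finset.insert_comm]

lemma jsupp_der (i : ℕ) (a : α) (f : Finset α → ℝ) :
    ((jsupp (i+1) f).filter (fun x => a ∈ x)).card = (jsupp i (der a f)).card := by
  apply card_nbij' (fun x => x.erase a) (fun y => insert a y)
  · intro x hx
    simp only [mem_coe, mem_filter] at hx
    obtain ⟨hxs, hax⟩ := hx
    rw [mem_jsupp] at hxs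
    rw [mem_coe, mem_jsupp_der]
    refine ⟨by rw [card_erase_of_mem hax, hxs.1]; omega, notMem_erase a x, ?_⟩
    rw [insert_erase hax]; exact hxs.2
  · intro y hy
    rw [mem_coe, mem_jsupp_der] at hy
    simp only [mem_coe, mem_filter, mem_jsupp]
    exact ⟨⟨by rw [card_insert_of_notMem hy.2.1, hy.1], hy.2.2⟩, mem_insert_self a y⟩
  · intro x hx
    simp only [mem_coe, mem_filter] at hx
    exact insert_erase hx.2
  · intro y hy
    rw [mem_coe, mem_jsupp_der] at hy
    exact erase_insert hy.2.1

lemma sum_card_filter (i : ℕ) (f : Finset α → ℝ) (hs : ∀ x ∈ jsupp i f, x.card = i) :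
    ∑ a ∈ jvars i f, ((jsupp i f).filter (fun x => a ∈ x)).card
      = i * (jsupp i f).card := by
  simp_rw [card_filter]
  rw [sum_comm]
  have : ∀ x ∈ jsupp i f, ∑ a ∈ jvars i f, (if a ∈ x then 1 else 0) = i := by
    intro x hx
    rw [← card_filter]
    have : (jvars i f).filter (fun a => a ∈ x) = x := by
      ext b
      simp only [mem_filter]
      exact ⟨fun h => h.2, fun h => ⟨subset_jvars hx h, h⟩⟩
    rw [this, hs x hx]
  rw [sum_congr rfl this, sum_const, smul_eq_mul, mul_comm]

def Good (i : ℕ) (f : Finset α → ℝ) : Prop :=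
  ∃ (m m' : Fin i → α) (c : ℝ), Function.Injective (Sum.elim m m') ∧ c ≠ 0 ∧
    ∀ x : Finset α, x.card = i →
      f x = if ∀ k : Fin i, Xor (m k ∈ x) (m' k ∈ x) then
          c * (-1 : ℝ) ^ ((x ∩ Finset.image m Finset.univ).card)
        else 0

section inj
variable {i : ℕ} {m m' : Fin i → α}

lemma inj_left (hinj : Function.Injective (Sum.elim m m')) : Function.Injective m := fun k l hkl =>
  Sum.inl.inj (hinj (show Sum.elim m m' (Sum.inl k) = Sum.elim m m' (Sum.inl l) from hkl))

lemma inj_right (hinj : Function.Injective (Sum.elim m m')) : Function.Injective m' := fun k l hkl =>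
  Sum.inr.inj (hinj (show Sum.elim m m' (Sum.inr k) = Sum.elim m m' (Sum.inr l) from hkl))

lemma inj_ne (hinj : Function.Injective (Sum.elim m m')) : ∀ k l, m k ≠ m' l := fun k l hkl => by
  have := hinj (show Sum.elim m m' (Sum.inl k) = Sum.elim m m' (Sum.inr l) from hkl)
  simp at this

/-- any set satisfying the Xor condition with the right cardinality is inside M ∪ M' -/
lemma xor_subset (hinj : Function.Injective (Sum.elim m m')) {y : Finset α} (hy : y.card = i)
    (hxor : ∀ k, Xor (m k ∈ y) (m' k ∈ y)) :
    y ⊆ image m univ ∪ image m' univ := by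
  classical
  set sel : Fin i → α := fun k => if m k ∈ y then m k else m' k with hsel
  have hselmem : ∀ k, sel k ∈ y := by
    intro k
    by_cases h : m k ∈ y
    · simp [hsel, h]
    · rcases hxor k with ⟨h1, h2⟩ | ⟨h1, h2⟩
      · exact absurd h1 h
      · simp [hsel, h, h1]
  have hselinj : Function.Injective sel := by
    intro k l hkl
    simp only [hsel] at hkl
    by_cases h1 : m k ∈ y <;> by_cases h2 : m l ∈ y <;> simp only [h1, h2, if_pos, if_neg,
      if_true, if_false] at hkl
    · exact inj_left hinj hkl
    · exact absurd hkl (inj_ne hinj k l)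
    · exact absurd hkl.symm (inj_ne hinj l k)
    · exact inj_right hinj hkl
  have himg : image sel univ = y := by
    apply eq_of_subset_of_card_le
    · intro b hb
      obtain ⟨k, _, rfl⟩ := mem_image.1 hb
      exact hselmem k
    · rw [hy, card_image_of_injective _ hselinj, card_univ, Fintype.card_fin]
  rw [← himg]
  intro b hb
  obtain ⟨k, _, rfl⟩ := mem_image.1 hb
  simp only [hsel]
  by_cases h : m k ∈ y
  · simp only [if_pos h]
    exact mem_union_left _ (mem_image_of_mem m (mem_univ k))
  · simp only [if_neg h]
    exact mem_union_right _ (mem_image_of_mem m' (mem_univ k))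

/-- every element of M ∪ M' lies in some transversal -/
lemma exists_transversal_mem (hinj : Function.Injective (Sum.elim m m')) {b : α}
    (hb : b ∈ image m univ ∪ image m' univ) :
    ∃ y : Finset α, y.card = i ∧ (∀ k, Xor (m k ∈ y) (m' k ∈ y)) ∧ b ∈ y := by
  classical
  rcases mem_union.1 hb with hbm | hbm
  · obtain ⟨k, _, rfl⟩ := mem_image.1 hbm
    refine ⟨insert (m k) (image m' (univ.erase k)), ?_, ?_, mem_insert_self _ _⟩
    · rw [card_insert_of_notMem (by
        intro h
        obtain ⟨l, _, hl⟩ := mem_image.1 h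
        exact inj_ne hinj k l hl.symm)]
      rw [card_image_of_injective _ (inj_right hinj), card_erase_of_mem (mem_univ k),
        card_univ, Fintype.card_fin]
      have : 0 < i := k.pos
      omega
    · intro j
      by_cases hjk : j = k
      · subst hjk
        left
        refine ⟨mem_insert_self _ _, ?_⟩
        intro h
        rcases mem_insert.1 h with h | h
        · exact inj_ne hinj j j h.symm
        · obtain ⟨l, hl, hl2⟩ := mem_image.1 h
          exact (mem_erase.1 hl).1 (inj_right hinj hl2)
      · right
        constructor
        · exact mem_insert_of_mem
            (mem_image_of_mem m' (mem_erase.2 ⟨hjk, mem_univ j⟩))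
        · intro h
          rcases mem_insert.1 h with h | h
          · exact hjk (inj_left hinj h)
          · obtain ⟨l, _, hl2⟩ := mem_image.1 h
            exact inj_ne hinj j l hl2.symm
  · obtain ⟨k, _, rfl⟩ := mem_image.1 hbm
    refine ⟨image m' univ, ?_, ?_, mem_image_of_mem m' (mem_univ k)⟩
    · rw [card_image_of_injective _ (inj_right hinj), card_univ, Fintype.card_fin]
    · intro j
      right
      refine ⟨mem_image_of_mem m' (mem_univ j), ?_⟩
      intro h
      obtain ⟨l, _, hl⟩ := mem_image.1 h
      exact inj_ne hinj j l hl.symm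

end inj

lemma image_snoc_univ {i : ℕ} (m : Fin i → α) (a : α) :
    image (Fin.snoc m a : Fin (i+1) → α) univ = insert a (image m univ) := by
  ext b
  simp only [mem_image, mem_insert]
  constructor
  · rintro ⟨k, _, rfl⟩
    induction k using Fin.lastCases with
    | last => left; rw [Fin.snoc_last]
    | cast j => right; exact ⟨j, mem_univ j, by rw [Fin.snoc_castSucc]⟩
  · rintro (rfl | ⟨j, _, rfl⟩)
    · exact ⟨Fin.last i, mem_univ _, Fin.snoc_last _ _⟩
    · exact ⟨j.castSucc, mem_univ _, Fin.snoc_castSucc _ _ _⟩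

lemma snoc_elim_inj {i : ℕ} {m m' : Fin i → α} {a b : α}
    (hinj : Function.Injective (Sum.elim m m'))
    (ha : a ∉ image m univ ∪ image m' univ)
    (hb : b ∉ image m univ ∪ image m' univ) (hab : a ≠ b) :
    Function.Injective (Sum.elim (Fin.snoc m a : Fin (i+1) → α) (Fin.snoc m' b)) := by
  have haM : ∀ k, a ≠ m k := fun k h =>
    ha (mem_union_left _ (h ▸ mem_image_of_mem m (mem_univ k)))
  have haM' : ∀ k, a ≠ m' k := fun k h =>
    ha (mem_union_right _ (h ▸ mem_image_of_mem m' (mem_univ k)))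
  have hbM : ∀ k, b ≠ m k := fun k h =>
    hb (mem_union_left _ (h ▸ mem_image_of_mem m (mem_univ k)))
  have hbM' : ∀ k, b ≠ m' k := fun k h =>
    hb (mem_union_right _ (h ▸ mem_image_of_mem m' (mem_univ k)))
  rintro (k | k) (l | l) h <;> simp only [Sum.elim_inl, Sum.elim_inr] at h
  · induction k using Fin.lastCases with
    | last =>
      induction l using Fin.lastCases with
      | last => rfl
      | cast j => rw [Fin.snoc_last, Fin.snoc_castSucc] at h; exact absurd h (haM j)
    | cast j =>
      induction l using Fin.lastCases with
      | last => rw [Fin.snoc_last, Fin.snoc_castSucc] at h; exact absurd h.symm (haM j)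
      | cast j' =>
        rw [Fin.snoc_castSucc, Fin.snoc_castSucc] at h
        rw [inj_left hinj h]
  · induction k using Fin.lastCases with
    | last =>
      induction l using Fin.lastCases with
      | last => rw [Fin.snoc_last, Fin.snoc_last] at h; exact absurd h hab
      | cast j => rw [Fin.snoc_last, Fin.snoc_castSucc] at h; exact absurd h (haM' j)
    | cast j =>
      induction l using Fin.lastCases with
      | last => rw [Fin.snoc_last, Fin.snoc_castSucc] at h; exact absurd h.symm (hbM j)
      | cast j' =>
        rw [Fin.snoc_castSucc, Fin.snoc_castSucc] at h
        exact absurd h (inj_ne hinj j j')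
  · induction k using Fin.lastCases with
    | last =>
      induction l using Fin.lastCases with
      | last => rw [Fin.snoc_last, Fin.snoc_last] at h; exact absurd h.symm hab
      | cast j => rw [Fin.snoc_last, Fin.snoc_castSucc] at h; exact absurd h (hbM j)
    | cast j =>
      induction l using Fin.lastCases with
      | last => rw [Fin.snoc_last, Fin.snoc_castSucc] at h; exact absurd h.symm (haM' j)
      | cast j' =>
        rw [Fin.snoc_castSucc, Fin.snoc_castSucc] at h
        exact absurd h.symm (inj_ne hinj j' j)
  · induction k using Fin.lastCases with
    | last =>
      induction l using Fin.lastCases with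
      | last => rfl
      | cast j => rw [Fin.snoc_last, Fin.snoc_castSucc] at h; exact absurd h (hbM' j)
    | cast j =>
      induction l using Fin.lastCases with
      | last => rw [Fin.snoc_last, Fin.snoc_castSucc] at h; exact absurd h.symm (hbM' j)
      | cast j' =>
        rw [Fin.snoc_castSucc, Fin.snoc_castSucc] at h
        rw [inj_right hinj h]

theorem main_ind (i : ℕ) (hi : 1 ≤ i) : ∀ f : Finset α → ℝ, Harm i f →
    (jsupp i f).Nonempty →
    2^i ≤ (jsupp i f).card ∧ ((jsupp i f).card = 2^i → Good i f) := by
  induction i, hi using Nat.le_induction with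
  | base =>
    intro f hh hne
    have h0 : ∑ a ∈ (univ : Finset α), f {a} = 0 := by
      have := hh ∅ (by simp)
      simpa using this
    obtain ⟨x0, hx0⟩ := hne
    obtain ⟨hx0c, hx0f⟩ := mem_jsupp.1 hx0
    obtain ⟨a0, rfl⟩ := card_eq_one.1 hx0c
    have hzero : ∀ b : α, {b} ∉ jsupp 1 f → f {b} = 0 := by
      intro b hb
      by_contra hfb
      exact hb (mem_jsupp.2 ⟨card_singleton b, hfb⟩)
    constructor
    · by_contra hlt
      push_neg at hlt
      have hone : (jsupp 1 f).card = 1 := by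
        have : 0 < (jsupp 1 f).card := card_pos.2 ⟨_, hx0⟩
        omega
      obtain ⟨z, hz⟩ := card_eq_one.1 hone
      have hza : z = {a0} := by
        have := hx0
        rw [hz, mem_singleton] at this
        exact this.symm
      have : ∑ a ∈ (univ : Finset α), f {a} = f {a0} := by
        rw [Finset.sum_eq_single_of_mem a0 (mem_univ a0)]
        intro b _ hb
        apply hzero
        rw [hz, hza, mem_singleton]
        intro h
        exact hb (singleton_inj.1 h)
      rw [h0] at this
      exact hx0f this.symm
    · intro hcard
      rw [pow_one] at hcard
      obtain ⟨u, v, huv, hsupp2⟩ := card_eq_two.1 hcard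
      have hu : u ∈ jsupp 1 f := by rw [hsupp2]; exact mem_insert_self u {v}
      have hv : v ∈ jsupp 1 f := by rw [hsupp2]; simp
      obtain ⟨a1, rfl⟩ := card_eq_one.1 (mem_jsupp.1 hu).1
      obtain ⟨b1, rfl⟩ := card_eq_one.1 (mem_jsupp.1 hv).1
      have hab : a1 ≠ b1 := fun h => huv (by rw [h])
      have hsum2 : f {a1} + f {b1} = 0 := by
        rw [← h0]
        symm
        have hpair : ∑ a ∈ ({a1, b1} : Finset α), f {a} = f {a1} + f {b1} :=
          Finset.sum_pair hab
        rw [← hpair]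
        symm
        apply sum_subset (subset_univ _)
        intro b _ hb
        apply hzero
        rw [hsupp2]
        simp only [mem_insert, mem_singleton, singleton_inj]
        rw [mem_insert, mem_singleton] at hb
        push_neg at hb
        simp [singleton_inj, hb.1, hb.2]
      refine ⟨fun _ => a1, fun _ => b1, -f {a1}, ?_, by simpa using (mem_jsupp.1 hu).2, ?_⟩
      · rintro (k | k) (l | l) h <;>
          simp only [Sum.elim_inl, Sum.elim_inr] at h
        · rw [Subsingleton.elim k l]
        · exact absurd h hab
        · exact absurd h.symm hab
        · rw [Subsingleton.elim k l]
      · intro x hx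
        obtain ⟨t, rfl⟩ := card_eq_one.1 hx
        have himg : image (fun _ : Fin 1 => a1) univ = {a1} := by
          ext b; simp
        rw [himg]
        by_cases hta : t = a1
        · subst hta
          rw [if_pos]
          · rw [inter_self, card_singleton]
            ring
          · intro k
            left
            simp [mem_singleton, hab, Ne.symm hab]
        · by_cases htb : t = b1
          · subst htb
            rw [if_pos]
            · rw [show ({t} : Finset α) ∩ {a1} = ∅ by
                simp [singleton_inter_of_notMem, mem_singleton, Ne.symm hta]]
              simp only [card_empty, pow_zero, mul_one]
              linarith [hsum2]
            · intro k
              right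
              simp [mem_singleton, hta, hab]
          · rw [if_neg]
            · apply hzero
              rw [hsupp2]
              simp [singleton_inj, hta, htb]
            · intro hk
              rcases hk 0 with ⟨h1, _⟩ | ⟨h1, _⟩
              · rw [mem_singleton] at h1; exact hta h1.symm
              · rw [mem_singleton] at h1; exact htb h1.symm
  | succ i hi IH =>
    intro f hh hne
    have hi1 : 1 ≤ i + 1 := by omega
    set V := jvars (i+1) f with hVdef
    have hV : 2*(i+1) ≤ V.card := vars_ge (i+1) hi1 f hh hne
    have hder_harm : ∀ a : α, Harm i (der a f) := fun a => harm_der i hi a f hh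
    have hder_ne : ∀ a ∈ V, (jsupp i (der a f)).Nonempty := by
      intro a ha
      obtain ⟨x, hx, hax⟩ := mem_jvars.1 ha
      obtain ⟨hxc, hxf⟩ := mem_jsupp.1 hx
      exact ⟨x.erase a, mem_jsupp_der.2 ⟨by rw [card_erase_of_mem hax, hxc, Nat.add_sub_cancel],
        notMem_erase a x, by rw [insert_erase hax]; exact hxf⟩⟩
    have hder_lb : ∀ a ∈ V, 2^i ≤ ((jsupp (i+1) f).filter (fun x => a ∈ x)).card := by
      intro a ha
      rw [jsupp_der]
      exact (IH (der a f) (hder_harm a) (hder_ne a ha)).1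
    have hsum : ∑ a ∈ V, ((jsupp (i+1) f).filter (fun x => a ∈ x)).card
        = (i+1) * (jsupp (i+1) f).card :=
      sum_card_filter (i+1) f (fun x hx => (mem_jsupp.1 hx).1)
    have h1 : V.card * 2^i ≤ (i+1) * (jsupp (i+1) f).card := by
      rw [← hsum]
      calc V.card * 2^i = ∑ _a ∈ V, 2^i := by rw [sum_const, smul_eq_mul]
        _ ≤ _ := sum_le_sum hder_lb
    have hLB : 2^(i+1) ≤ (jsupp (i+1) f).card := by
      have h2 : (i+1) * 2^(i+1) ≤ (i+1) * (jsupp (i+1) f).card := by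
        have he : (i+1) * 2^(i+1) = (2*(i+1)) * 2^i := by ring
        rw [he]
        exact le_trans (Nat.mul_le_mul_right _ hV) h1
      exact Nat.le_of_mul_le_mul_left h2 (by omega)
    refine ⟨hLB, ?_⟩
    intro hcard
    have hVcard : V.card = 2*(i+1) := by
      have hle : V.card * 2^i ≤ (2*(i+1)) * 2^i := by
        rw [hcard] at h1
        calc V.card * 2^i ≤ (i+1) * 2^(i+1) := h1
          _ = (2*(i+1)) * 2^i := by ring
      have := Nat.le_of_mul_le_mul_right hle (by positivity)
      omega
    have hallEq : ∀ a ∈ V, ((jsupp (i+1) f).filter (fun x => a ∈ x)).card = 2^i := by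
      by_contra hcon
      push_neg at hcon
      obtain ⟨a0, ha0, hne0⟩ := hcon
      have hlt : ∑ _a ∈ V, 2^i < ∑ a ∈ V, ((jsupp (i+1) f).filter (fun x => a ∈ x)).card :=
        sum_lt_sum hder_lb ⟨a0, ha0, lt_of_le_of_ne (hder_lb a0 ha0) (Ne.symm hne0)⟩
      rw [sum_const, smul_eq_mul, hsum, hcard, hVcard] at hlt
      have he : (i+1) * 2^(i+1) = (2*(i+1)) * 2^i := by ring
      omega
    have hgood : ∀ a ∈ V, Good i (der a f) := by
      intro a ha
      apply (IH (der a f) (hder_harm a) (hder_ne a ha)).2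
      rw [← jsupp_der]
      exact hallEq a ha
    obtain ⟨x0, hx0⟩ := hne
    have hx0c := (mem_jsupp.1 hx0).1
    obtain ⟨a, hax0⟩ := card_pos.1 (by rw [hx0c]; omega : 0 < x0.card)
    have haV : a ∈ V := subset_jvars hx0 hax0
    obtain ⟨m, m', c0, hinj, hc0, hform⟩ := hgood a haV
    set M := image m univ with hM
    set M' := image m' univ with hM'
    have hsupp_iff : ∀ y : Finset α, y ∈ jsupp i (der a f) ↔
        (y.card = i ∧ ∀ k, Xor (m k ∈ y) (m' k ∈ y)) := by
      intro y
      rw [mem_jsupp]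
      constructor
      · rintro ⟨hyc, hgy⟩
        refine ⟨hyc, ?_⟩
        by_contra hxor
        rw [hform y hyc, if_neg hxor] at hgy
        exact hgy rfl
      · rintro ⟨hyc, hxor⟩
        refine ⟨hyc, ?_⟩
        rw [hform y hyc, if_pos hxor]
        exact mul_ne_zero hc0 (pow_ne_zero _ (by norm_num))
    have hMsub : M ∪ M' ⊆ V \ {a} := by
      intro b hb
      obtain ⟨y, hyc, hyx, hby⟩ := exists_transversal_mem hinj hb
      have hyg : y ∈ jsupp i (der a f) := (hsupp_iff y).2 ⟨hyc, hyx⟩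
      have hy3 := mem_jsupp_der.1 hyg
      have hins : insert a y ∈ jsupp (i+1) f := mem_jsupp.2
        ⟨by rw [card_insert_of_notMem hy3.2.1, hy3.1], hy3.2.2⟩
      refine mem_sdiff.2 ⟨subset_jvars hins (mem_insert_of_mem hby), ?_⟩
      simp only [mem_singleton]
      intro hba
      exact hy3.2.1 (hba ▸ hby)
    have hdisjMM : Disjoint M M' := by
      rw [disjoint_left]
      intro b hbm hbm'
      obtain ⟨k, _, rfl⟩ := mem_image.1 hbm
      obtain ⟨l, _, hl⟩ := mem_image.1 hbm'
      exact inj_ne hinj k l hl.symm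
    have hMcard : (M ∪ M').card = 2*i := by
      rw [card_union_of_disjoint hdisjMM, hM, hM',
        card_image_of_injective _ (inj_left hinj),
        card_image_of_injective _ (inj_right hinj), card_univ, Fintype.card_fin]
      ring
    have haM : a ∉ M ∪ M' := by
      intro h
      have := mem_sdiff.1 (hMsub h)
      simp at this
    set W := insert a (M ∪ M') with hW
    have hWsub : W ⊆ V := insert_subset haV (fun b hb => (mem_sdiff.1 (hMsub hb)).1)
    have hWcard : W.card = 2*i + 1 := by rw [hW, card_insert_of_notMem haM, hMcard]
    have hVW : (V \ W).card = 1 := by rw [card_sdiff_of_subset hWsub, hVcard, hWcard]; omega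
    obtain ⟨abar, habar⟩ := card_eq_one.1 hVW
    have habar' : abar ∈ V ∧ abar ∉ W := by
      have : abar ∈ V \ W := habar ▸ mem_singleton_self abar
      exact mem_sdiff.1 this
    have habar_ne : abar ≠ a := fun h => habar'.2 (h ▸ mem_insert_self a _)
    have habarM : abar ∉ M ∪ M' := fun h => habar'.2 (mem_insert_of_mem h)
    have herase : ∀ x ∈ jsupp (i+1) f, a ∈ x → x.erase a ∈ jsupp i (der a f) := by
      intro x hx hax
      obtain ⟨hxc, hxf⟩ := mem_jsupp.1 hx
      exact mem_jsupp_der.2 ⟨by rw [card_erase_of_mem hax, hxc, Nat.add_sub_cancel], notMem_erase a x,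
        by rw [insert_erase hax]; exact hxf⟩
    have hdisj : ∀ x ∈ jsupp (i+1) f, a ∈ x → abar ∉ x := by
      intro x hx hax hbx
      have h1 := (hsupp_iff _).1 (herase x hx hax)
      have h2 : abar ∈ x.erase a := mem_erase.2 ⟨habar_ne, hbx⟩
      exact habarM (xor_subset hinj h1.1 h1.2 h2)
    have hcover : ∀ x ∈ jsupp (i+1) f, a ∈ x ∨ abar ∈ x := by
      set Sa := (jsupp (i+1) f).filter (fun x => a ∈ x) with hSadef
      set Sb := (jsupp (i+1) f).filter (fun x => abar ∈ x) with hSbdef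
      have hSa : Sa.card = 2^i := hallEq a haV
      have hSb : Sb.card = 2^i := hallEq abar habar'.1
      have hdisj2 : Disjoint Sa Sb := by
        rw [disjoint_left]
        intro x hxa hxb
        exact hdisj x (mem_filter.1 hxa).1 (mem_filter.1 hxa).2 (mem_filter.1 hxb).2
      have hunion : Sa ∪ Sb = jsupp (i+1) f := by
        apply eq_of_subset_of_card_le
        · exact union_subset (filter_subset _ _) (filter_subset _ _)
        · rw [card_union_of_disjoint hdisj2, hSa, hSb, hcard]
          omega
      intro x hx
      rw [← hunion] at hx
      rcases mem_union.1 hx with h | h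
      · exact Or.inl (mem_filter.1 h).2
      · exact Or.inr (mem_filter.1 h).2
    have hlink : ∀ S : Finset α, S.card = i → a ∉ S → abar ∉ S →
        f (insert a S) + f (insert abar S) = 0 := by
      intro S hS haS hbS
      have h1 := hh S (by rw [hS, Nat.add_sub_cancel])
      have hpair : ∑ b ∈ ({a, abar} : Finset α), f (insert b S)
          = f (insert a S) + f (insert abar S) := Finset.sum_pair (Ne.symm habar_ne)
      rw [← h1, ← hpair]
      apply sum_subset
      · intro b hb
        rcases mem_insert.1 hb with rfl | hb
        · exact mem_compl.2 haS
        · rw [mem_singleton] at hb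
          subst hb
          exact mem_compl.2 hbS
      · intro b hbc hbnot
        by_contra hfb
        have hbS2 : b ∉ S := mem_compl.1 hbc
        have hins : insert b S ∈ jsupp (i+1) f := mem_jsupp.2
          ⟨by rw [card_insert_of_notMem hbS2, hS], hfb⟩
        rw [mem_insert, mem_singleton] at hbnot
        push_neg at hbnot
        rcases hcover _ hins with h | h
        · rcases mem_insert.1 h with h | h
          · exact hbnot.1 h.symm
          · exact haS h
        · rcases mem_insert.1 h with h | h
          · exact hbnot.2 h.symm
          · exact hbS h
    refine ⟨Fin.snoc m a, Fin.snoc m' abar, -c0,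
      snoc_elim_inj hinj haM habarM (fun h => habar_ne h.symm),
      neg_ne_zero.2 hc0, ?_⟩
    have himg : image (Fin.snoc m a : Fin (i+1) → α) univ = insert a M :=
      image_snoc_univ m a
    intro x hx
    rw [himg]
    have hmja : ∀ j : Fin i, m j ≠ a :=
      fun j h => haM (h ▸ mem_union_left _ (mem_image_of_mem m (mem_univ j)))
    have hmja' : ∀ j : Fin i, m' j ≠ a :=
      fun j h => haM (h ▸ mem_union_right _ (mem_image_of_mem m' (mem_univ j)))
    have hmjb : ∀ j : Fin i, m j ≠ abar :=
      fun j h => habarM (h ▸ mem_union_left _ (mem_image_of_mem m (mem_univ j)))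
    have hmjb' : ∀ j : Fin i, m' j ≠ abar :=
      fun j h => habarM (h ▸ mem_union_right _ (mem_image_of_mem m' (mem_univ j)))
    by_cases hxs : x ∈ jsupp (i+1) f
    · rcases hcover x hxs with hax | hbx
      · -- contains a
        have hyg := herase x hxs hax
        obtain ⟨hyc, hyxor⟩ := (hsupp_iff _).1 hyg
        have hxy : x = insert a (x.erase a) := (insert_erase hax).symm
        have hbarx : abar ∉ x := hdisj x hxs hax
        have hcond : ∀ k : Fin (i+1),
            Xor ((Fin.snoc m a : Fin (i+1) → α) k ∈ x)
              ((Fin.snoc m' abar : Fin (i+1) → α) k ∈ x) := by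
          intro k
          induction k using Fin.lastCases with
          | last => rw [Fin.snoc_last, Fin.snoc_last]; exact Or.inl ⟨hax, hbarx⟩
          | cast j =>
            rw [Fin.snoc_castSucc, Fin.snoc_castSucc]
            have e1 : (m j ∈ x) ↔ (m j ∈ x.erase a) :=
              (mem_erase.trans (by simp [hmja j])).symm
            have e2 : (m' j ∈ x) ↔ (m' j ∈ x.erase a) :=
              (mem_erase.trans (by simp [hmja' j])).symm
            simp only [e1, e2]
            exact hyxor j
        rw [if_pos hcond]
        have hd : der a f (x.erase a) = f x := by
          rw [der, if_neg (notMem_erase a x), ← hxy]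
        have hval : f x = c0 * (-1:ℝ)^(((x.erase a) ∩ M).card) := by
          rw [← hd, hform _ hyc, if_pos hyxor]
        have hcapx : x ∩ insert a M = insert a ((x.erase a) ∩ M) := by
          conv_lhs => rw [hxy]
          ext b
          simp only [mem_inter, mem_insert]
          constructor
          · rintro ⟨rfl | hb1, h2⟩
            · exact Or.inl rfl
            · rcases h2 with rfl | h2
              · exact Or.inl rfl
              · exact Or.inr ⟨hb1, h2⟩
          · rintro (rfl | ⟨h1, h2⟩)
            · exact ⟨Or.inl rfl, Or.inl rfl⟩
            · exact ⟨Or.inr h1, Or.inr h2⟩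
        rw [hcapx, card_insert_of_notMem
          (fun h => haM (mem_union_left _ (mem_inter.1 h).2)), hval, pow_succ]
        ring
      · -- contains abar
        have hax : a ∉ x := fun h => (hdisj x hxs h) hbx
        have hyc : (x.erase abar).card = i := by
          rw [card_erase_of_mem hbx, (mem_jsupp.1 hxs).1, Nat.add_sub_cancel]
        have hxy : x = insert abar (x.erase abar) := (insert_erase hbx).symm
        have hay : a ∉ x.erase abar := fun h => hax (mem_of_mem_erase h)
        have hbary : abar ∉ x.erase abar := notMem_erase _ _
        have hl := hlink _ hyc hay hbary
        rw [← hxy] at hl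
        have hfx : f (insert a (x.erase abar)) = - f x := by linarith
        have hfay : f (insert a (x.erase abar)) ≠ 0 := by
          rw [hfx]
          exact neg_ne_zero.2 (mem_jsupp.1 hxs).2
        have hyg : x.erase abar ∈ jsupp i (der a f) :=
          mem_jsupp_der.2 ⟨hyc, hay, hfay⟩
        obtain ⟨_, hyxor⟩ := (hsupp_iff _).1 hyg
        have hcond : ∀ k : Fin (i+1),
            Xor ((Fin.snoc m a : Fin (i+1) → α) k ∈ x)
              ((Fin.snoc m' abar : Fin (i+1) → α) k ∈ x) := by
          intro k
          induction k using Fin.lastCases with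
          | last => rw [Fin.snoc_last, Fin.snoc_last]; exact Or.inr ⟨hbx, hax⟩
          | cast j =>
            rw [Fin.snoc_castSucc, Fin.snoc_castSucc]
            have e1 : (m j ∈ x) ↔ (m j ∈ x.erase abar) :=
              (mem_erase.trans (by simp [hmjb j])).symm
            have e2 : (m' j ∈ x) ↔ (m' j ∈ x.erase abar) :=
              (mem_erase.trans (by simp [hmjb' j])).symm
            simp only [e1, e2]
            exact hyxor j
        rw [if_pos hcond]
        have hd : der a f (x.erase abar) = f (insert a (x.erase abar)) := by
          rw [der, if_neg hay]
        have hval : f (insert a (x.erase abar)) = c0 * (-1:ℝ)^(((x.erase abar) ∩ M).card) := by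
          rw [← hd, hform _ hyc, if_pos hyxor]
        have hcap : x ∩ insert a M = (x.erase abar) ∩ M := by
          conv_lhs => rw [hxy]
          ext b
          simp only [mem_inter, mem_insert]
          constructor
          · rintro ⟨rfl | hb1, h2⟩
            · rcases h2 with rfl | h2
              · exact absurd rfl habar_ne
              · exact absurd (mem_union_left _ h2) habarM
            · rcases h2 with rfl | h2
              · exact absurd (mem_of_mem_erase hb1) hax
              · exact ⟨hb1, h2⟩
          · rintro ⟨h1, h2⟩
            exact ⟨Or.inr h1, Or.inr h2⟩
        rw [hcap]
        have hfx2 : f x = -(c0 * (-1:ℝ)^(((x.erase abar) ∩ M).card)) := by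
          rw [← hval]
          linarith
        rw [hfx2]
        ring
    · -- not in support
      have hfx : f x = 0 := by
        by_contra h
        exact hxs (mem_jsupp.2 ⟨hx, h⟩)
      rw [hfx, if_neg]
      intro hcond
      have hlast := hcond (Fin.last i)
      rw [Fin.snoc_last, Fin.snoc_last] at hlast
      have hcast : ∀ j : Fin i, Xor (m j ∈ x) (m' j ∈ x) := by
        intro j
        have := hcond j.castSucc
        rwa [Fin.snoc_castSucc, Fin.snoc_castSucc] at this
      rcases hlast with ⟨hax, hbarx⟩ | ⟨hbarx, hax⟩
      · have hyc : (x.erase a).card = i := by rw [card_erase_of_mem hax, hx, Nat.add_sub_cancel]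
        have hyxor : ∀ j, Xor (m j ∈ x.erase a) (m' j ∈ x.erase a) := by
          intro j
          have e1 : (m j ∈ x.erase a) ↔ (m j ∈ x) := mem_erase.trans (by simp [hmja j])
          have e2 : (m' j ∈ x.erase a) ↔ (m' j ∈ x) := mem_erase.trans (by simp [hmja' j])
          simp only [e1, e2]
          exact hcast j
        have hyg : x.erase a ∈ jsupp i (der a f) := (hsupp_iff _).2 ⟨hyc, hyxor⟩
        have h3 := mem_jsupp_der.1 hyg
        apply hxs
        apply mem_jsupp.2 ⟨hx, ?_⟩
        rw [← insert_erase hax]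
        exact h3.2.2
      · have hyc : (x.erase abar).card = i := by rw [card_erase_of_mem hbarx, hx, Nat.add_sub_cancel]
        have hyxor : ∀ j, Xor (m j ∈ x.erase abar) (m' j ∈ x.erase abar) := by
          intro j
          have e1 : (m j ∈ x.erase abar) ↔ (m j ∈ x) := mem_erase.trans (by simp [hmjb j])
          have e2 : (m' j ∈ x.erase abar) ↔ (m' j ∈ x) := mem_erase.trans (by simp [hmjb' j])
          simp only [e1, e2]
          exact hcast j
        have hay : a ∉ x.erase abar := fun h => hax (mem_of_mem_erase h)
        have hbary : abar ∉ x.erase abar := notMem_erase _ _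
        have hyg : x.erase abar ∈ jsupp i (der a f) := (hsupp_iff _).2 ⟨hyc, hyxor⟩
        have h3 := mem_jsupp_der.1 hyg
        have hl := hlink _ hyc hay hbary
        rw [← insert_erase hbarx] at hfx
        rw [hfx] at hl
        exact h3.2.2 (by linarith)

theorem min_eigen_support_characterization (n i : ℕ) (hi : 1 ≤ i) (hn : 2 * i ≤ n)
    (f : Finset (Fin n) → ℝ)
    (hne : ∃ x : Finset (Fin n), x.card = i ∧ f x ≠ 0)
    (hf : ∀ x : Finset (Fin n), x.card = i →
      ∑ y ∈ univ.filter (fun y : Finset (Fin n) => y.card = i ∧ (x ∩ y).card + 1 = i), f y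
        = -(i : ℝ) * f x)
    (hsupp : (univ.filter (fun x : Finset (Fin n) => x.card = i ∧ f x ≠ 0)).card = 2 ^ i) :
    ∃ (m m' : Fin i → Fin n) (c : ℝ), Function.Injective (Sum.elim m m') ∧ c ≠ 0 ∧
      ∀ x : Finset (Fin n), x.card = i →
        f x = if ∀ k : Fin i, Xor (m k ∈ x) (m' k ∈ x) then
            c * (-1 : ℝ) ^ ((x ∩ Finset.image m Finset.univ).card)
          else 0 := by
  have hharm : Harm i f := eigen_harm i hi f hf
  obtain ⟨x1, hx1c, hx1f⟩ := hne
  have hnem : (jsupp i f).Nonempty := ⟨x1, mem_jsupp.2 ⟨hx1c, hx1f⟩⟩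
  have hcard : (jsupp i f).card = 2 ^ i := hsupp
  exact (main_ind i hi f hharm hnem).2 hcard
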